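/- Wald's lemma for Markov chains: Let (X_n)_{n≥0} be an irreducible, aperiodic Markov chain on a finite state space [m] with transition matrix P and stationary distribution π, let f : [m] → ℝ, and let ω solve the Poisson equation (I−P)ω = f − (π f)·𝟏. Then the process U_0 = ω(X_0), U_n = ω(X_n) + ∑_{k=0}^{n−1}(f(X_k) − π f) for n ≥ 1, is a martingale with respect to the natural filtration, and if N is a stopping time with E[N] < ∞ then E[∑_{k=0}^{N−1} f(X_k)] = (π f)·E[N] + E[ω(X_0) − ω(X_N)]. -/

import Mathlib

open MeasureTheory

open Filter Topology

theorem stmt10 (m : ℕ) (hm : 0 < m)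
    (P : Matrix (Fin m) (Fin m) ℝ)
    (hP0 : ∀ i j, 0 ≤ P i j) (hP1 : ∀ i, ∑ j, P i j = 1)
    (herg : ∃ n : ℕ, ∀ i j, 0 < (P ^ n) i j)
    (π : Fin m → ℝ) (hπ0 : ∀ i, 0 ≤ π i) (hπ1 : ∑ i, π i = 1)
    (hstat : ∀ j, ∑ i, π i * P i j = π j)
    (f w : Fin m → ℝ)
    (hpoisson : ((1 : Matrix (Fin m) (Fin m) ℝ) - P).mulVec w =
      fun i => f i - ∑ j, π j * f j)
    {Ω : Type*} [m0 : MeasurableSpace Ω] (μ : Measure Ω) [IsProbabilityMeasure μ]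
    (X : ℕ → Ω → Fin m)
    (ℱ : Filtration ℕ m0)
    (hadapted : ∀ n, Measurable[ℱ n] (X n))
    (hmarkov : ∀ (n : ℕ) (g : Fin m → ℝ),
      μ[(fun ω => g (X (n + 1) ω)) | ℱ n] =ᵐ[μ]
        fun ω => ∑ j, P (X n ω) j * g j) :
    Martingale (fun n ω => w (X n ω) +
        ∑ k ∈ Finset.range n, (f (X k ω) - ∑ j, π j * f j)) ℱ μ ∧
    ∀ N : Ω → ℕ, IsStoppingTime ℱ (fun ω => (N ω : WithTop ℕ)) →
      Integrable (fun ω => (N ω : ℝ)) μ →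
      ∫ ω, (∑ k ∈ Finset.range (N ω), f (X k ω)) ∂μ =
        (∑ j, π j * f j) * (∫ ω, (N ω : ℝ) ∂μ) +
        ∫ ω, (w (X 0 ω) - w (X (N ω) ω)) ∂μ := by
  classical
  set c : ℝ := ∑ j, π j * f j with hc
  have hPw : ∀ i, ∑ j, P i j * w j = w i - (f i - c) := by
    intro i
    have h := congrFun hpoisson i
    simp only [Matrix.sub_mulVec, Matrix.one_mulVec, Pi.sub_apply] at h
    have h2 : P.mulVec w i = ∑ j, P i j * w j := rfl
    rw [h2] at h
    linarith
  have hXm : ∀ n, Measurable (X n) := fun n => (hadapted n).mono (ℱ.le n) le_rfl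
  haveI : Nonempty (Fin m) := ⟨⟨0, hm⟩⟩
  obtain ⟨C, hC⟩ := Finite.exists_le fun i => max |w i| |f i - c|
  have hCw : ∀ i, |w i| ≤ C := fun i => le_trans (le_max_left _ _) (hC i)
  have hCf : ∀ i, |f i - c| ≤ C := fun i => le_trans (le_max_right _ _) (hC i)
  have hC0 : 0 ≤ C := le_trans (abs_nonneg _) (hCw ⟨0, hm⟩)
  set U : ℕ → Ω → ℝ := fun n ω => w (X n ω) + ∑ k ∈ Finset.range n, (f (X k ω) - c) with hUdef
  -- measurability
  have hgF : ∀ (g : Fin m → ℝ) (n : ℕ), Measurable[ℱ n] fun ω => g (X n ω) :=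
    fun g n => (measurable_of_countable g).comp (hadapted n)
  have hUF : ∀ n, Measurable[ℱ n] (U n) := by
    intro n
    refine Measurable.add (hgF w n) (Finset.measurable_sum _ fun k hk => ?_)
    have hk' : k ≤ n := (Finset.mem_range.1 hk).le
    exact ((measurable_of_countable (fun i => f i - c)).comp
      ((hadapted k).mono (ℱ.mono hk') le_rfl))
  have hUm : ∀ n, Measurable (U n) := fun n => (hUF n).mono (ℱ.le n) le_rfl
  have hUbd : ∀ n ω, |U n ω| ≤ C + n * C := by
    intro n ω
    calc |U n ω| ≤ |w (X n ω)| + |∑ k ∈ Finset.range n, (f (X k ω) - c)| := abs_add_le _ _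
    _ ≤ C + n * C := by
        refine add_le_add (hCw _) ?_
        calc |∑ k ∈ Finset.range n, (f (X k ω) - c)|
            ≤ ∑ k ∈ Finset.range n, |f (X k ω) - c| := Finset.abs_sum_le_sum_abs _ _
          _ ≤ ∑ _k ∈ Finset.range n, C := Finset.sum_le_sum fun k _ => hCf _
          _ = n * C := by simp [mul_comm]
  have hUint : ∀ n, Integrable (U n) μ := by
    intro n
    exact ⟨(hUm n).aestronglyMeasurable,
      HasFiniteIntegral.of_bounded (C := C + n * C) (ae_of_all μ fun ω => hUbd n ω)⟩
  -- martingale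
  have hmart : Martingale U ℱ μ := by
    refine martingale_nat (fun n => (hUF n).stronglyMeasurable) hUint fun n => ?_
    have hsplit : U (n + 1) = (fun ω => w (X (n + 1) ω)) +
        fun ω => ∑ k ∈ Finset.range (n + 1), (f (X k ω) - c) := rfl
    have hint1 : Integrable (fun ω => w (X (n + 1) ω)) μ :=
      ⟨((measurable_of_countable w).comp (hXm (n + 1))).aestronglyMeasurable,
        HasFiniteIntegral.of_bounded (C := C) (ae_of_all μ fun ω => hCw _)⟩
    have hint2 : Integrable (fun ω => ∑ k ∈ Finset.range (n + 1), (f (X k ω) - c)) μ := by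
      refine integrable_finset_sum _ fun k _ => ?_
      exact ⟨((measurable_of_countable fun i => f i - c).comp (hXm k)).aestronglyMeasurable,
        HasFiniteIntegral.of_bounded (C := C) (ae_of_all μ fun ω => hCf _)⟩
    have hce := condExp_add (μ := μ) (m := ℱ n) hint1 hint2
    rw [hsplit]
    refine EventuallyEq.symm (hce.trans ?_)
    have h2 : μ[(fun ω => ∑ k ∈ Finset.range (n + 1), (f (X k ω) - c)) | ℱ n] =ᵐ[μ]
        fun ω => ∑ k ∈ Finset.range (n + 1), (f (X k ω) - c) := by
      refine EventuallyEq.of_eq (condExp_of_stronglyMeasurable (ℱ.le n) ?_ hint2)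
      refine Measurable.stronglyMeasurable (Finset.measurable_sum _ fun k hk => ?_)
      have hk' : k ≤ n := Nat.lt_succ_iff.1 (Finset.mem_range.1 hk)
      exact (measurable_of_countable (fun i => f i - c)).comp
        ((hadapted k).mono (ℱ.mono hk') le_rfl)
    have h1 := hmarkov n w
    refine (EventuallyEq.add h1 h2).trans (EventuallyEq.of_eq ?_)
    funext ω
    simp only [hPw, Finset.sum_range_succ, Pi.add_apply]
    ring
  refine ⟨hmart, ?_⟩
  intro N hN hNint
  have hNm : Measurable N := by
    refine measurable_to_countable' fun n => ?_
    have := ℱ.le n _ (hN.measurableSet_eq n)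
    convert this using 1
    ext ω
    simp
  -- measurability of stopped values
  have hUprod : Measurable fun p : Ω × ℕ => U p.2 p.1 :=
    measurable_from_prod_countable_left fun n => hUm n
  have hSVm : ∀ T : Ω → ℕ, Measurable T → Measurable (stoppedValue U (fun ω => (T ω : WithTop ℕ))) := by
    intro T hT
    exact hUprod.comp (measurable_id.prodMk hT)
  have hbdN : ∀ n ω, |stoppedValue U (fun ω => ((min (N ω) n : ℕ) : WithTop ℕ)) ω| ≤ C + C * N ω := by
    intro n ω
    refine le_trans (hUbd (min (N ω) n) ω) ?_
    have h1 : ((min (N ω) n : ℕ) : ℝ) ≤ (N ω : ℝ) := Nat.cast_le.2 (min_le_left _ _)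
    have h2 := mul_le_mul_of_nonneg_right h1 hC0
    linarith
  have hbound_int : Integrable (fun ω => C + C * N ω) μ :=
    (integrable_const C).add (hNint.const_mul C)
  -- finite horizon optional stopping
  have hstep : ∀ n : ℕ, ∫ ω, stoppedValue U (fun ω => ((min (N ω) n : ℕ) : WithTop ℕ)) ω ∂μ = ∫ ω, U 0 ω ∂μ := by
    intro n
    have hτ : IsStoppingTime ℱ (fun _ : Ω => ((0 : ℕ) : WithTop ℕ)) := isStoppingTime_const ℱ 0
    have hπ' : IsStoppingTime ℱ fun ω => ((min (N ω) n : ℕ) : WithTop ℕ) := by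
      have e : (fun ω => ((min (N ω) n : ℕ) : WithTop ℕ)) =
          fun ω => min (N ω : WithTop ℕ) (n : WithTop ℕ) := by
        funext ω; exact WithTop.coe_min (N ω) n
      rw [e]
      exact hN.min_const n
    have hle : (fun _ : Ω => ((0 : ℕ) : WithTop ℕ)) ≤ fun ω => ((min (N ω) n : ℕ) : WithTop ℕ) :=
      fun ω => WithTop.coe_le_coe.2 (Nat.zero_le _)
    have hbd : ∀ ω, ((min (N ω) n : ℕ) : WithTop ℕ) ≤ (n : WithTop ℕ) :=
      fun ω => WithTop.coe_le_coe.2 (min_le_right _ _)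
    have h1 := hmart.submartingale.expected_stoppedValue_mono hτ hπ' hle hbd
    have h2 := hmart.neg.submartingale.expected_stoppedValue_mono hτ hπ' hle hbd
    have hneg : ∀ T : Ω → WithTop ℕ, stoppedValue (-U) T = -(stoppedValue U T) := fun T => rfl
    simp only [hneg, Pi.neg_apply, integral_neg, neg_le_neg_iff] at h2
    have h3 := le_antisymm h2 h1
    exact h3
  -- limit
  have hlim : Tendsto (fun n => ∫ ω, stoppedValue U (fun ω => ((min (N ω) n : ℕ) : WithTop ℕ)) ω ∂μ) atTop
      (𝓝 (∫ ω, stoppedValue U (fun ω => (N ω : WithTop ℕ)) ω ∂μ)) := by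
    refine tendsto_integral_of_dominated_convergence (fun ω => C + C * N ω)
      (fun n => (hSVm _ (hNm.min measurable_const)).aestronglyMeasurable)
      hbound_int (fun n => ae_of_all μ fun ω => ?_) (ae_of_all μ fun ω => ?_)
    · exact hbdN n ω
    · refine tendsto_const_nhds.congr' ?_
      filter_upwards [eventually_ge_atTop (N ω)] with n hn
      simp [stoppedValue, min_eq_left hn]
  have hkey : ∫ ω, stoppedValue U (fun ω => (N ω : WithTop ℕ)) ω ∂μ = ∫ ω, U 0 ω ∂μ := by
    refine tendsto_nhds_unique ?_ hlim |>.symm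
    simp only [hstep]
    simpa using tendsto_const_nhds (x := ∫ ω, U 0 ω ∂μ) (f := atTop (α := ℕ))
  -- integrable pieces
  have habs : ∀ ω, |stoppedValue U (fun ω => (N ω : WithTop ℕ)) ω| ≤ C + C * N ω := by
    intro ω
    refine le_trans (hUbd (N ω) ω) ?_
    nlinarith [hC0]
  have hSVint : Integrable (stoppedValue U (fun ω => (N ω : WithTop ℕ))) μ := by
    refine hbound_int.mono (hSVm N hNm).aestronglyMeasurable (ae_of_all μ fun ω => ?_)
    have h0 : (0:ℝ) ≤ C + C * N ω := by positivity
    simpa [Real.norm_eq_abs, abs_of_nonneg h0] using habs ω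
  have hwXN : Integrable (fun ω => w (X (N ω) ω)) μ := by
    have hmeas : Measurable fun ω => w (X (N ω) ω) := by
      have h1 : Measurable fun p : Ω × ℕ => w (X p.2 p.1) :=
        measurable_from_prod_countable_left fun n => (measurable_of_countable w).comp (hXm n)
      exact h1.comp (measurable_id.prodMk hNm)
    exact ⟨hmeas.aestronglyMeasurable,
      HasFiniteIntegral.of_bounded (C := C) (ae_of_all μ fun ω => hCw _)⟩
  have hwX0 : Integrable (fun ω => w (X 0 ω)) μ :=
    ⟨((measurable_of_countable w).comp (hXm 0)).aestronglyMeasurable,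
      HasFiniteIntegral.of_bounded (C := C) (ae_of_all μ fun ω => hCw _)⟩
  -- pointwise decomposition
  have hdecomp : ∀ ω, ∑ k ∈ Finset.range (N ω), f (X k ω) =
      stoppedValue U (fun ω => (N ω : WithTop ℕ)) ω - w (X (N ω) ω) + (N ω : ℝ) * c := by
    intro ω
    show ∑ k ∈ Finset.range (N ω), f (X k ω) = U (N ω) ω - w (X (N ω) ω) + (N ω : ℝ) * c
    simp only [stoppedValue, hUdef, Finset.sum_sub_distrib, Finset.sum_const,
      Finset.card_range, nsmul_eq_mul]
    ring
  have hU0 : ∫ ω, U 0 ω ∂μ = ∫ ω, w (X 0 ω) ∂μ := by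
    simp [hUdef]
  calc ∫ ω, (∑ k ∈ Finset.range (N ω), f (X k ω)) ∂μ
      = ∫ ω, (stoppedValue U (fun ω => (N ω : WithTop ℕ)) ω - w (X (N ω) ω) + (N ω : ℝ) * c) ∂μ := by
        exact integral_congr_ae (ae_of_all μ hdecomp)
    _ = ∫ ω, stoppedValue U (fun ω => (N ω : WithTop ℕ)) ω ∂μ - ∫ ω, w (X (N ω) ω) ∂μ + ∫ ω, (N ω : ℝ) * c ∂μ := by
        have hI1 : Integrable (fun ω => stoppedValue U (fun ω => (N ω : WithTop ℕ)) ω - w (X (N ω) ω)) μ :=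
          hSVint.sub hwXN
        rw [integral_add hI1 (hNint.mul_const c), integral_sub hSVint hwXN]
    _ = c * (∫ ω, (N ω : ℝ) ∂μ) + ∫ ω, (w (X 0 ω) - w (X (N ω) ω)) ∂μ := by
        rw [hkey, hU0, integral_sub hwX0 hwXN]
        simp only [integral_mul_const]
        ring
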